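/- Given nonnegative real numbers b_1,...,b_n with Σ_{i=1}^n b_i = 1/n^{n-1}, there exist strictly positive real numbers t_1,...,t_n with Σ t_i = 1 such that t_1^{t_1} ⋯ t_n^{t_n} ≥ b_i^{t_i} for every i = 1,...,n. -/

import Mathlib

open Real in
theorem exists_weights_plank (n : ℕ) (hn : 0 < n) (b : Fin n → ℝ)
    (hb : ∀ i, 0 ≤ b i) (hsum : ∑ i, b i = 1 / (n : ℝ) ^ (n - 1)) :
    ∃ t : Fin n → ℝ, (∀ i, 0 < t i) ∧ ∑ i, t i = 1 ∧
      ∀ i, b i ^ (t i) ≤ ∏ j, (t j) ^ (t j) := by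
  -- dispose of the case n = 1
  by_cases hn1 : n = 1
  · subst hn1
    refine ⟨fun _ => 1, fun _ => one_pos, by simp, ?_⟩
    intro i
    have hb1 : b i = 1 := by
      have : b i = ∑ j, b j := by
        rw [show i = (0 : Fin 1) from Subsingleton.elim _ _]
        simp [Fin.sum_univ_one]
      rw [this, hsum]; norm_num
    simp [hb1]
  have hn2 : 2 ≤ n := by omega
  set N : ℝ := (n : ℝ) with hNdef
  have hN2 : (2 : ℝ) ≤ N := by rw [hNdef]; exact_mod_cast hn2
  have hN0 : 0 < N := by linarith
  have hN1 : 1 < N := by linarith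
  set P : ℝ := N ^ (n - 1) with hPdef
  have hP0 : 0 < P := pow_pos hN0 _
  have hsum' : ∑ i, b i = 1 / P := hsum
  -- normalized weights c
  set c : Fin n → ℝ := fun j => P * b j with hcdef
  have hc0 : ∀ j, 0 ≤ c j := fun j => mul_nonneg hP0.le (hb j)
  have hcsum : ∑ j, c j = 1 := by
    simp only [hcdef, ← Finset.mul_sum, hsum']
    field_simp
  have hc1 : ∀ j, c j ≤ 1 := by
    intro j
    rw [← hcsum]
    exact Finset.single_le_sum (fun k _ => hc0 k) (Finset.mem_univ j)
  -- reference distribution q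
  set q : Fin n → ℝ := fun j => (N * c j + N - 1) / N ^ 2 with hqdef
  have hq0 : ∀ j, 0 < q j := by
    intro j
    apply div_pos _ (by positivity)
    have := hc0 j
    nlinarith
  have hqsum : ∑ j, q j = 1 := by
    simp only [hqdef]
    rw [← Finset.sum_div]
    have h : ∑ j, (N * c j + N - 1) = N * (∑ j, c j) + (n : ℝ) * (N - 1) := by
      have e : ∀ j : Fin n, N * c j + N - 1 = N * c j + (N - 1) := fun j => by ring
      simp_rw [e]
      rw [Finset.sum_add_distrib, ← Finset.mul_sum, Finset.sum_const, Finset.card_univ,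
        Fintype.card_fin, nsmul_eq_mul]
    rw [h, hcsum, ← hNdef]
    field_simp
    ring
  -- key per-term estimate : b j ≤ q j ^ n  (Bernoulli / AM-GM)
  have hbq : ∀ j, b j ≤ q j ^ n := by
    intro j
    have hcj0 : 0 ≤ N * c j := mul_nonneg hN0.le (hc0 j)
    have hbern : N * c j ≤ ((N * c j + N - 1) / N) ^ n := by
      have h1 : (1 : ℝ) + (n : ℕ) * ((N * c j - 1) / N) ≤ (1 + (N * c j - 1) / N) ^ n := by
        apply one_add_mul_le_pow
        rw [le_div_iff₀ hN0]
        nlinarith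
      have e1 : (1 : ℝ) + (n : ℕ) * ((N * c j - 1) / N) = N * c j := by
        rw [← hNdef]
        field_simp
        ring
      have e2 : (1 : ℝ) + (N * c j - 1) / N = (N * c j + N - 1) / N := by
        field_simp
        ring
      rw [e1, e2] at h1
      exact h1
    have hNn : N ^ n = N * P := by
      rw [hPdef, ← pow_succ']
      congr 1
      omega
    have hq' : q j ^ n = ((N * c j + N - 1) / N) ^ n / N ^ n := by
      simp only [hqdef, ← div_pow]
      congr 1
      rw [div_div]
      congr 1
      ring
    rw [hq', hNn, le_div_iff₀ (by positivity)]
    have e3 : b j * (N * P) = N * c j := by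
      simp only [hcdef]; ring
    rw [e3]
    exact hbern
  -- the exponents B
  set B : Fin n → ℝ := fun j => if b j = 0 then N * Real.log (N ^ 2 / (N - 1)) else -Real.log (b j)
    with hBdef
  have hb_lt_one : ∀ j, b j < 1 := by
    intro j
    have h1 : b j ≤ 1 / P := by
      rw [← hsum']
      exact Finset.single_le_sum (fun k _ => hb k) (Finset.mem_univ j)
    have h2 : (2 : ℝ) ≤ P := by
      calc (2 : ℝ) ≤ N := hN2
      _ = N ^ 1 := (pow_one N).symm
      _ ≤ N ^ (n - 1) := pow_le_pow_right₀ (by linarith) (by omega)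
    have : 1 / P < 1 := by
      rw [div_lt_one hP0]; linarith
    linarith
  have hB0 : ∀ j, 0 < B j := by
    intro j
    simp only [hBdef]
    split_ifs with h
    · apply mul_pos hN0
      apply Real.log_pos
      rw [lt_div_iff₀ (by linarith)]
      nlinarith
    · have hbj : 0 < b j := (hb j).lt_of_ne (Ne.symm h)
      have := Real.log_neg hbj (hb_lt_one j)
      linarith
  -- key log estimate : -(B j) / N ≤ log (q j)
  have hkey : ∀ j, -(B j) / N ≤ Real.log (q j) := by
    intro j
    simp only [hBdef]
    split_ifs with h
    · have hc0' : c j = 0 := by simp [hcdef, h]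
      have hqj : q j = (N - 1) / N ^ 2 := by simp [hqdef, hc0']
      have hN1' : (0 : ℝ) < N - 1 := by linarith
      have e : Real.log (q j) = Real.log (N - 1) - Real.log (N ^ 2) := by
        rw [hqj, Real.log_div (ne_of_gt hN1') (by positivity)]
      have e2 : Real.log (N ^ 2 / (N - 1)) = Real.log (N ^ 2) - Real.log (N - 1) := by
        rw [Real.log_div (by positivity) (ne_of_gt hN1')]
      have negdiv : ∀ x : ℝ, -(N * x) / N = -x := by
        intro x
        field_simp
      rw [e, e2, negdiv]
      linarith
    · have hbj : 0 < b j := (hb j).lt_of_ne (Ne.symm h)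
      have h1 : Real.log (b j) ≤ Real.log (q j ^ n) :=
        Real.log_le_log (by positivity) (hbq j)
      rw [Real.log_pow] at h1
      rw [neg_neg, div_le_iff₀ hN0]
      calc Real.log (b j) ≤ (n : ℝ) * Real.log (q j) := h1
        _ = Real.log (q j) * N := by rw [hNdef]; ring
  -- construct t
  set U : ℝ := ∑ j, (B j)⁻¹ with hUdef
  haveI : Nonempty (Fin n) := ⟨⟨0, hn⟩⟩
  have hU0 : 0 < U := Finset.sum_pos (fun j _ => inv_pos.mpr (hB0 j)) Finset.univ_nonempty
  set t : Fin n → ℝ := fun j => (B j)⁻¹ / U with htdef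
  have ht0 : ∀ j, 0 < t j := fun j => div_pos (inv_pos.mpr (hB0 j)) hU0
  have htsum : ∑ j, t j = 1 := by
    simp only [htdef]
    rw [← Finset.sum_div, ← hUdef, div_self hU0.ne']
  have htB : ∀ j, t j * B j = U⁻¹ := by
    intro j
    simp only [htdef]
    rw [div_mul_eq_mul_div, inv_mul_cancel₀ (hB0 j).ne', one_div]
  refine ⟨t, ht0, htsum, ?_⟩
  -- main estimate on ∑ t log t
  have hmain : -U⁻¹ ≤ ∑ j, t j * Real.log (t j) := by
    have h1 : ∑ j, t j * Real.log (q j) ≤ ∑ j, t j * Real.log (t j) := by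
      have h2 : ∀ j ∈ Finset.univ, t j * Real.log (q j) - t j * Real.log (t j) ≤ q j - t j := by
        intro j _
        have hlog : Real.log (q j) - Real.log (t j) ≤ q j / t j - 1 := by
          rw [← Real.log_div (hq0 j).ne' (ht0 j).ne']
          exact Real.log_le_sub_one_of_pos (div_pos (hq0 j) (ht0 j))
        have := mul_le_mul_of_nonneg_left hlog (ht0 j).le
        calc t j * Real.log (q j) - t j * Real.log (t j)
            = t j * (Real.log (q j) - Real.log (t j)) := by ring
          _ ≤ t j * (q j / t j - 1) := this
          _ = q j - t j := by rw [mul_sub, mul_div_cancel₀ _ (ht0 j).ne', mul_one]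
      have h3 := Finset.sum_le_sum h2
      rw [Finset.sum_sub_distrib] at h3
      have h4 : ∑ j, (q j - t j) = 0 := by
        rw [Finset.sum_sub_distrib, hqsum, htsum]; ring
      linarith
    have h5 : ∑ j, t j * (-(B j) / N) ≤ ∑ j, t j * Real.log (q j) :=
      Finset.sum_le_sum fun j _ => mul_le_mul_of_nonneg_left (hkey j) (ht0 j).le
    have h6 : ∑ j, t j * (-(B j) / N) = -U⁻¹ := by
      have e : ∀ j, t j * (-(B j) / N) = -(U⁻¹ / N) := by
        intro j
        rw [mul_div_assoc', mul_neg, neg_div, htB j]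
      rw [Finset.sum_congr rfl fun j _ => e j, Finset.sum_const, Finset.card_univ,
        Fintype.card_fin, nsmul_eq_mul]
      rw [hNdef]
      field_simp
    linarith
  intro i
  have hprod : ∏ j, t j ^ t j = Real.exp (∑ j, t j * Real.log (t j)) := by
    rw [Real.exp_sum]
    apply Finset.prod_congr rfl
    intro j _
    rw [Real.rpow_def_of_pos (ht0 j)]
    ring_nf
  by_cases hbi : b i = 0
  · rw [hbi, Real.zero_rpow (ht0 i).ne', hprod]
    positivity
  · have hbi0 : 0 < b i := (hb i).lt_of_ne (Ne.symm hbi)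
    rw [Real.rpow_def_of_pos hbi0, hprod]
    apply Real.exp_le_exp.mpr
    have hBi : B i = -Real.log (b i) := by simp [hBdef, hbi]
    have h7 : Real.log (b i) * t i = -U⁻¹ := by
      have := htB i
      rw [hBi] at this
      linarith [this]
    rw [h7]
    exact hmain
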